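/- Let m, n, a, b ≥ 2 be integers with a and b both dividing gcd(m,n), and b > a. Then the multinomial coefficient C((m+n)/a; m/a, n/a) is strictly greater than C((m+n)/b; m/b, n/b). -/

import Mathlib

lemma aux_strictmono (j : ℕ) (hj : 1 ≤ j) :
    StrictMono (fun k => Nat.choose (k + j) k) := by
  apply strictMono_nat_of_lt_succ
  intro k
  have h1 : k + 1 + j = (k + j) + 1 := by ring
  rw [h1, Nat.choose_succ_succ]
  simp only [Nat.succ_eq_add_one]
  have hpos : 0 < Nat.choose (k + j) (k + 1) :=
    Nat.choose_pos (by omega)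
  omega

theorem stmt_0 (m n a b : ℕ) (hm : 2 ≤ m) (hn : 2 ≤ n) (ha : 2 ≤ a) (hb : 2 ≤ b)
    (ham : a ∣ m) (han : a ∣ n) (hbm : b ∣ m) (hbn : b ∣ n) (hab : a < b) :
    Nat.choose ((m + n) / b) (m / b) < Nat.choose ((m + n) / a) (m / a) := by
  have hda : (m + n) / a = m / a + n / a := Nat.add_div_of_dvd_right ham
  have hdb : (m + n) / b = m / b + n / b := Nat.add_div_of_dvd_right hbm
  rw [hda, hdb]
  have hmb1 : 1 ≤ m / b := Nat.one_le_div_iff (by omega) |>.mpr (Nat.le_of_dvd (by omega) hbm)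
  have hnb1 : 1 ≤ n / b := Nat.one_le_div_iff (by omega) |>.mpr (Nat.le_of_dvd (by omega) hbn)
  have hmlt : m / b < m / a := by
    rw [Nat.lt_div_iff_mul_lt_of_dvd (by omega) ham]
    have h2 : m / b * b ≤ m := Nat.div_mul_le_self m b
    nlinarith
  have hnle : n / b ≤ n / a := Nat.div_le_div_left (le_of_lt hab) (by omega)
  calc Nat.choose (m / b + n / b) (m / b)
      < Nat.choose (m / a + n / b) (m / a) := aux_strictmono (n / b) hnb1 hmlt
    _ ≤ Nat.choose (m / a + n / a) (m / a) :=
        Nat.choose_le_choose _ (by omega)
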